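/- Assume Hypothesis (H). Then every Baire sup-measurable function F : ℝ × ℝ → ℝ has the Baire property; that is, there is no Baire sup-measurable function without the Baire property. -/

import Mathlib

open scoped symmDiff

/-- A set has the Baire property if it equals the symmetric difference of an
open set and a meager set. -/
def HasBaireProperty {X : Type*} [TopologicalSpace X] (S : Set X) : Prop :=
  ∃ U M : Set X, IsOpen U ∧ IsMeagre M ∧ S = U ∆ M

/-- A function has the Baire property if the preimage of every open set has
the Baire property. -/
def BaireFunction {X Y : Type*} [TopologicalSpace X] [TopologicalSpace Y] (g : X → Y) : Prop :=
  ∀ U : Set Y, IsOpen U → HasBaireProperty (g ⁻¹' U)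

/-- `F : ℝ × ℝ → ℝ` is Baire sup-measurable if for every `f : ℝ → ℝ` with the Baire
property, the function `x ↦ F (x, f x)` has the Baire property. -/
def BaireSupMeasurable (F : ℝ × ℝ → ℝ) : Prop :=
  ∀ f : ℝ → ℝ, BaireFunction f → BaireFunction (fun x => F (x, f x))

/-- A set `A` is nowhere meager in `X` if `A ∩ U` is nonmeager for every
nonempty open `U ⊆ X`. -/
def NowhereMeager {X : Type*} [TopologicalSpace X] (A : Set X) : Prop :=
  ∀ U : Set X, IsOpen U → U.Nonempty → ¬ IsMeagre (A ∩ U)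

/-- Hypothesis (H): for every `A ⊆ 2^ω × 2^ω` such that both `A` and its complement
are nowhere meager, there is an autohomeomorphism `f` of the Cantor space `2^ω`
such that `{x : (x, f x) ∈ A}` does not have the Baire property. -/
def HypH : Prop :=
  ∀ A : Set ((ℕ → Bool) × (ℕ → Bool)),
    NowhereMeager A → NowhereMeager Aᶜ →
    ∃ f : (ℕ → Bool) ≃ₜ (ℕ → Bool),
      ¬ HasBaireProperty {x : ℕ → Bool | (x, f x) ∈ A}

section Aux

open scoped symmDiff
open Topology Set

section Generic
variable {X : Type*} [TopologicalSpace X] {S U M : Set X}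

lemma hasBP_of_symmDiff (hU : IsOpen U) (hM : IsMeagre (S ∆ U)) : HasBaireProperty S :=
  ⟨U, S ∆ U, hU, hM, by rw [symmDiff_comm S U, symmDiff_symmDiff_cancel_left]⟩

lemma HasBaireProperty.exists_isOpen (h : HasBaireProperty S) :
    ∃ U, IsOpen U ∧ IsMeagre (S ∆ U) := by
  obtain ⟨U, M, hU, hM, rfl⟩ := h
  refine ⟨U, hU, ?_⟩
  rwa [symmDiff_comm U M, symmDiff_symmDiff_cancel_right]

lemma hasBaireProperty_iff_baireMeasurableSet :
    HasBaireProperty S ↔ BaireMeasurableSet S := by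
  constructor
  · rintro ⟨U, M, hU, hM, rfl⟩
    rw [Set.symmDiff_def]
    exact (hU.baireMeasurableSet.diff hM.baireMeasurableSet).union
      (hM.baireMeasurableSet.diff hU.baireMeasurableSet)
  · intro h
    obtain ⟨U, hU, hSU⟩ := h.residualEq_isOpen
    refine hasBP_of_symmDiff hU ?_
    rw [IsMeagre]
    filter_upwards [hSU] with x hx
    simp only [Set.mem_compl_iff, Set.mem_symmDiff]
    simp only [eq_iff_iff] at hx
    tauto

lemma IsOpen.hasBaireProperty (hU : IsOpen U) : HasBaireProperty U :=
  hasBaireProperty_iff_baireMeasurableSet.2 hU.baireMeasurableSet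

lemma IsMeagre.hasBaireProperty (hM : IsMeagre M) : HasBaireProperty M :=
  hasBaireProperty_iff_baireMeasurableSet.2 hM.baireMeasurableSet

lemma HasBaireProperty.compl (h : HasBaireProperty S) : HasBaireProperty Sᶜ :=
  hasBaireProperty_iff_baireMeasurableSet.2
    (hasBaireProperty_iff_baireMeasurableSet.1 h).compl

lemma HasBaireProperty.union {T : Set X} (h : HasBaireProperty S) (h' : HasBaireProperty T) :
    HasBaireProperty (S ∪ T) :=
  hasBaireProperty_iff_baireMeasurableSet.2
    ((hasBaireProperty_iff_baireMeasurableSet.1 h).union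
      (hasBaireProperty_iff_baireMeasurableSet.1 h'))

lemma HasBaireProperty.inter {T : Set X} (h : HasBaireProperty S) (h' : HasBaireProperty T) :
    HasBaireProperty (S ∩ T) :=
  hasBaireProperty_iff_baireMeasurableSet.2
    ((hasBaireProperty_iff_baireMeasurableSet.1 h).inter
      (hasBaireProperty_iff_baireMeasurableSet.1 h'))

lemma HasBaireProperty.diff {T : Set X} (h : HasBaireProperty S) (h' : HasBaireProperty T) :
    HasBaireProperty (S \ T) :=
  hasBaireProperty_iff_baireMeasurableSet.2
    ((hasBaireProperty_iff_baireMeasurableSet.1 h).diff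
      (hasBaireProperty_iff_baireMeasurableSet.1 h'))

/-- if `S \ M` is meagre and `M` is meagre then `S` is meagre. -/
lemma isMeagre_of_diff {S M : Set X} (h : IsMeagre (S \ M)) (hM : IsMeagre M) : IsMeagre S := by
  have : IsMeagre (S \ M ∪ M) := by
    rw [IsMeagre, Set.compl_union]
    exact Filter.inter_mem h hM
  exact this.mono (fun x hx => by by_cases h' : x ∈ M <;> [right; left] <;> simp_all)

lemma isNowhereDense_iff_opens : IsNowhereDense S ↔
    ∀ U : Set X, IsOpen U → U.Nonempty → ∃ V, IsOpen V ∧ V.Nonempty ∧ V ⊆ U ∧ V ∩ S = ∅ := by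
  constructor
  · intro h U hU hUne
    refine ⟨U \ closure S, hU.sdiff isClosed_closure, ?_, diff_subset, ?_⟩
    · rcases hUne with ⟨x, hx⟩
      by_contra hne
      rw [Set.not_nonempty_iff_eq_empty, diff_eq_empty] at hne
      have : U ⊆ interior (closure S) := interior_maximal hne hU
      rw [h] at this
      exact this hx
    · apply Set.eq_empty_of_subset_empty
      rintro x ⟨hx1, hx2⟩
      exact hx1.2 (subset_closure hx2)
  · intro h
    rw [IsNowhereDense]
    by_contra hne
    obtain ⟨V, hV, ⟨v, hv⟩, hVsub, hVS⟩ :=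
      h _ isOpen_interior (Set.nonempty_iff_ne_empty.2 hne)
    have hvc : v ∈ closure S := interior_subset (hVsub hv)
    rw [mem_closure_iff] at hvc
    obtain ⟨y, hy1, hy2⟩ := hvc V hV hv
    exact absurd hVS (by rw [← Set.not_nonempty_iff_eq_empty]; push_neg; exact ⟨y, hy1, hy2⟩)

end Generic
section Transfer
variable {X : Type*} [TopologicalSpace X] {I Y : Set X}

/-- nowhere-dense transfer between a space and a subspace which is dense in an open set. -/
lemma isNowhereDense_transfer (hI : IsOpen I) (hYI : Y ⊆ I) (hd : I ⊆ closure Y)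
    {t : Set X} (htY : t ⊆ Y) :
    IsNowhereDense t ↔ IsNowhereDense (Subtype.val ⁻¹' t : Set Y) := by
  constructor
  · intro h
    rw [isNowhereDense_iff_opens]
    rintro W hW hWne
    obtain ⟨O, hO, rfl⟩ := isOpen_induced_iff.1 hW
    obtain ⟨⟨y, hyY⟩, hy⟩ := hWne
    have hOI : (O ∩ I).Nonempty := ⟨y, hy, hYI hyY⟩
    obtain ⟨V, hV, hVne, hVsub, hVt⟩ :=
      (isNowhereDense_iff_opens.1 h) (O ∩ I) (hO.inter hI) hOI
    refine ⟨Subtype.val ⁻¹' V, continuous_subtype_val.isOpen_preimage _ hV, ?_, ?_, ?_⟩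
    · obtain ⟨v, hv⟩ := hVne
      have hvc : v ∈ closure Y := hd (hVsub hv).2
      rw [mem_closure_iff] at hvc
      obtain ⟨z, hz1, hz2⟩ := hvc V hV hv
      exact ⟨⟨z, hz2⟩, hz1⟩
    · exact fun z hz => (hVsub hz).1
    · apply Set.eq_empty_of_subset_empty
      rintro ⟨z, hzY⟩ ⟨hz1, hz2⟩
      have : z ∈ V ∩ t := ⟨hz1, hz2⟩
      rw [hVt] at this
      exact this
  · intro h
    rw [isNowhereDense_iff_opens]
    intro U hU hUne
    by_cases hUY : (U ∩ Y).Nonempty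
    · obtain ⟨W, hW, hWne, hWsub, hWt⟩ := (isNowhereDense_iff_opens.1 h)
        (Subtype.val ⁻¹' U) (continuous_subtype_val.isOpen_preimage _ hU)
        (by obtain ⟨y, hy1, hy2⟩ := hUY; exact ⟨⟨y, hy2⟩, hy1⟩)
      obtain ⟨O, hO, rfl⟩ := isOpen_induced_iff.1 hW
      refine ⟨O ∩ U ∩ I, (hO.inter hU).inter hI, ?_, fun z hz => hz.1.2, ?_⟩
      · obtain ⟨⟨y, hyY⟩, hy⟩ := hWne
        exact ⟨y, ⟨hy, hWsub hy⟩, hYI hyY⟩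
      · apply Set.eq_empty_of_subset_empty
        rintro z ⟨⟨⟨hzO, hzU⟩, hzI⟩, hzt⟩
        have hzY : z ∈ Y := htY hzt
        have : (⟨z, hzY⟩ : Y) ∈ (Subtype.val ⁻¹' O ∩ Subtype.val ⁻¹' t : Set Y) := ⟨hzO, hzt⟩
        rw [hWt] at this
        exact this
    · exact ⟨U, hU, hUne, subset_rfl, by
        apply Set.eq_empty_of_subset_empty
        rintro z ⟨hz1, hz2⟩
        exact hUY ⟨z, hz1, htY hz2⟩⟩

/-- meagre transfer between a space and a subspace dense in an open set. -/
lemma isMeagre_transfer (hI : IsOpen I) (hYI : Y ⊆ I) (hd : I ⊆ closure Y)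
    {S : Set X} (hSY : S ⊆ Y) :
    IsMeagre S ↔ IsMeagre (Subtype.val ⁻¹' S : Set Y) := by
  rw [isMeagre_iff_countable_union_isNowhereDense,
    isMeagre_iff_countable_union_isNowhereDense]
  constructor
  · rintro ⟨𝒮, h1, h2, h3⟩
    refine ⟨(fun t => (Subtype.val ⁻¹' t : Set Y)) '' 𝒮, ?_, h2.image _, ?_⟩
    · rintro t' ⟨t, ht, rfl⟩
      have : (Subtype.val ⁻¹' t : Set Y) = (Subtype.val ⁻¹' (t ∩ Y) : Set Y) := by
        ext ⟨z, hz⟩; simp [hz]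
      show IsNowhereDense (Subtype.val ⁻¹' t : Set Y)
      rw [this]
      exact (isNowhereDense_transfer hI hYI hd inter_subset_right).1
        ((h1 t ht).mono inter_subset_left)
    · rintro ⟨z, hzY⟩ hz
      obtain ⟨t, ht, hzt⟩ := h3 hz
      exact ⟨_, ⟨t, ht, rfl⟩, hzt⟩
  · rintro ⟨𝒮, h1, h2, h3⟩
    refine ⟨(fun t => (Subtype.val '' t : Set X)) '' 𝒮, ?_, h2.image _, ?_⟩
    · rintro t' ⟨t, ht, rfl⟩
      have hsub : (Subtype.val '' t : Set X) ⊆ Y := by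
        rintro z ⟨⟨w, hw⟩, _, rfl⟩; exact hw
      have := (isNowhereDense_transfer hI hYI hd hsub).2
      rw [Set.preimage_image_eq t Subtype.coe_injective] at this
      exact this (h1 t ht)
    · intro z hz
      obtain ⟨t, ht, hzt⟩ := h3 (show (⟨z, hSY hz⟩ : Y) ∈ Subtype.val ⁻¹' S from hz)
      exact ⟨_, ⟨t, ht, rfl⟩, ⟨z, hSY hz⟩, hzt, rfl⟩

end Transfer
section TransferBP
variable {X : Type*} [TopologicalSpace X] {I Y : Set X}

/-- meagre sets transfer forward across a homeomorphism (image form). -/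
lemma IsMeagre.homeo_image {A B : Type*} [TopologicalSpace A] [TopologicalSpace B]
    (e : A ≃ₜ B) {S : Set A} (h : IsMeagre S) : IsMeagre (e '' S) := by
  have heq : (e '' S) = e.symm ⁻¹' S := by
    ext z
    constructor
    · rintro ⟨w, hw, rfl⟩; simpa
    · intro hz; exact ⟨e.symm z, hz, by simp⟩
  rw [heq]
  exact h.preimage_of_isOpenMap e.symm.continuous e.symm.isOpenMap

lemma IsMeagre.union' {s t : Set X} (hs : IsMeagre s) (ht : IsMeagre t) :
    IsMeagre (s ∪ t) := by
  rw [IsMeagre, Set.compl_union]; exact Filter.inter_mem hs ht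

/-- restriction of a Baire-property set to a subspace dense in an open set. -/
lemma HasBaireProperty.restrict (hI : IsOpen I) (hYI : Y ⊆ I) (hd : I ⊆ closure Y)
    {S : Set X} (h : HasBaireProperty S) :
    HasBaireProperty (Subtype.val ⁻¹' S : Set Y) := by
  obtain ⟨U, hU, hM⟩ := h.exists_isOpen
  refine hasBP_of_symmDiff (U := (Subtype.val ⁻¹' U : Set Y))
    (continuous_subtype_val.isOpen_preimage _ hU) ?_
  have heq : (Subtype.val ⁻¹' S : Set Y) ∆ (Subtype.val ⁻¹' U) =
      Subtype.val ⁻¹' ((S ∆ U) ∩ Y) := by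
    ext ⟨z, hz⟩
    simp only [Set.mem_symmDiff, Set.mem_preimage, Set.mem_inter_iff]
    tauto
  rw [heq]
  exact (isMeagre_transfer hI hYI hd inter_subset_right).1 (hM.mono inter_subset_left)

/-- extension of a Baire-property set from a dense comeagre subspace. -/
lemma HasBaireProperty.extend (hYc : IsMeagre Yᶜ) (hd : Dense Y) {S : Set Y}
    (h : HasBaireProperty S) : HasBaireProperty (Subtype.val '' S : Set X) := by
  obtain ⟨W, hW, hM⟩ := h.exists_isOpen
  obtain ⟨U, hU, rfl⟩ := isOpen_induced_iff.1 hW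
  refine hasBP_of_symmDiff hU ?_
  have hMim : IsMeagre (Subtype.val '' (S ∆ (Subtype.val ⁻¹' U)) : Set X) := by
    refine (isMeagre_transfer isOpen_univ (subset_univ Y)
      (by rw [hd.closure_eq]) ?_).2 ?_
    · rintro z ⟨⟨w, hw⟩, _, rfl⟩; exact hw
    · rw [Set.preimage_image_eq _ Subtype.coe_injective]
      exact hM
  have hsub : (Subtype.val '' S : Set X) ∆ U ⊆
      (U \ Y) ∪ (Subtype.val '' (S ∆ (Subtype.val ⁻¹' U)) : Set X) := by
    rintro z hz
    rcases hz with ⟨⟨⟨w, hwY⟩, hwS, rfl⟩, hzU⟩ | ⟨hzU, hzS⟩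
    · exact Or.inr ⟨⟨w, hwY⟩, Or.inl ⟨hwS, hzU⟩, rfl⟩
    · by_cases hzY : z ∈ Y
      · refine Or.inr ⟨⟨z, hzY⟩, Or.inr ⟨hzU, ?_⟩, rfl⟩
        intro hS
        exact hzS ⟨⟨z, hzY⟩, hS, rfl⟩
      · exact Or.inl ⟨hzU, hzY⟩
  exact ((hYc.mono (fun z hz => hz.2)).union' hMim).mono hsub

end TransferBP
section Binary

noncomputable def bterm (x : ℕ → Bool) (n : ℕ) : ℝ := if x n then (2⁻¹ : ℝ) ^ (n + 1) else 0

noncomputable def binaryVal (x : ℕ → Bool) : ℝ := ∑' n, bterm x n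

def Hset : Set (ℕ → Bool) :=
  {x | ∀ N : ℕ, (∃ k, N ≤ k ∧ x k = true) ∧ (∃ k, N ≤ k ∧ x k = false)}

lemma bterm_nonneg (x : ℕ → Bool) (n : ℕ) : 0 ≤ bterm x n := by
  unfold bterm; split <;> positivity

lemma bterm_le (x : ℕ → Bool) (n : ℕ) : bterm x n ≤ (2⁻¹ : ℝ) ^ (n + 1) := by
  unfold bterm; split
  · exact le_rfl
  · positivity

lemma summable_shift_geo (m : ℕ) : Summable (fun k : ℕ => (2⁻¹ : ℝ) ^ (k + m)) := by
  have hg : Summable (fun k : ℕ => (2⁻¹ : ℝ) ^ k) :=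
    summable_geometric_of_lt_one (by norm_num) (by norm_num)
  simpa [pow_add] using hg.mul_right ((2⁻¹ : ℝ) ^ m)

lemma tsum_shift_geo (m : ℕ) : ∑' k : ℕ, (2⁻¹ : ℝ) ^ (k + m) = (2⁻¹ : ℝ) ^ m * 2 := by
  have hg : ∑' k : ℕ, (2⁻¹ : ℝ) ^ k = 2 := by
    rw [tsum_geometric_of_lt_one (by norm_num) (by norm_num)]; norm_num
  calc ∑' k : ℕ, (2⁻¹ : ℝ) ^ (k + m) = ∑' k : ℕ, (2⁻¹ : ℝ) ^ k * (2⁻¹ : ℝ) ^ m := by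
        simp [pow_add]
    _ = (∑' k : ℕ, (2⁻¹ : ℝ) ^ k) * (2⁻¹ : ℝ) ^ m := tsum_mul_right
    _ = (2⁻¹ : ℝ) ^ m * 2 := by rw [hg]; ring

lemma summable_bterm (x : ℕ → Bool) : Summable (bterm x) :=
  Summable.of_nonneg_of_le (bterm_nonneg x) (fun n => bterm_le x n)
    (by simpa using summable_shift_geo 1)

lemma summable_bterm_shift (x : ℕ → Bool) (m : ℕ) : Summable (fun k => bterm x (k + m)) :=
  ((summable_bterm x).comp_injective (add_left_injective m))

lemma tail_nonneg (x : ℕ → Bool) (m : ℕ) : 0 ≤ ∑' k, bterm x (k + m) :=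
  tsum_nonneg (fun k => bterm_nonneg x _)

lemma tail_le (x : ℕ → Bool) (m : ℕ) : ∑' k, bterm x (k + m) ≤ (2⁻¹ : ℝ) ^ m := by
  have h1 : ∑' k, bterm x (k + m) ≤ ∑' k : ℕ, (2⁻¹ : ℝ) ^ (k + (m + 1)) := by
    refine Summable.tsum_le_tsum (fun k => ?_) (summable_bterm_shift x m) (summable_shift_geo (m + 1))
    calc bterm x (k + m) ≤ (2⁻¹ : ℝ) ^ (k + m + 1) := bterm_le x _
      _ = (2⁻¹ : ℝ) ^ (k + (m + 1)) := by ring_nf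
  rw [tsum_shift_geo (m + 1)] at h1
  calc ∑' k, bterm x (k + m) ≤ (2⁻¹ : ℝ) ^ (m + 1) * 2 := h1
    _ = (2⁻¹ : ℝ) ^ m := by rw [pow_succ]; ring

lemma binary_split (x : ℕ → Bool) (n : ℕ) :
    binaryVal x = (∑ k ∈ Finset.range n, bterm x k) + ∑' k, bterm x (k + n) :=
  (Summable.sum_add_tsum_nat_add n (summable_bterm x)).symm

lemma partial_le_binary (x : ℕ → Bool) (n : ℕ) :
    (∑ k ∈ Finset.range n, bterm x k) ≤ binaryVal x := by
  rw [binary_split x n]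
  have := tail_nonneg x n
  linarith

lemma binary_le_partial (x : ℕ → Bool) (n : ℕ) :
    binaryVal x ≤ (∑ k ∈ Finset.range n, bterm x k) + (2⁻¹ : ℝ) ^ n := by
  rw [binary_split x n]
  have := tail_le x n
  linarith

/-- Key lower estimate: if `x` and `x'` agree below `n`, `x n = true`, `x' n = false`,
and `x j = true` for some `j > n`, then `binaryVal x' + 2⁻ʲ⁻¹ ≤ binaryVal x`. -/
lemma keyLow {x x' : ℕ → Bool} {n j : ℕ} (hagree : ∀ k < n, x' k = x k)
    (hxn : x n = true) (hx'n : x' n = false) (hnj : n < j) (hxj : x j = true) :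
    binaryVal x' + (2⁻¹ : ℝ) ^ (j + 1) ≤ binaryVal x := by
  have hps : (∑ k ∈ Finset.range n, bterm x' k) = ∑ k ∈ Finset.range n, bterm x k :=
    Finset.sum_congr rfl (fun k hk => by
      unfold bterm; rw [hagree k (Finset.mem_range.1 hk)])
  -- upper bound for binaryVal x'
  have hx'up : binaryVal x' ≤ (∑ k ∈ Finset.range n, bterm x k) + (2⁻¹ : ℝ) ^ (n + 1) := by
    have h1 : binaryVal x' = (∑ k ∈ Finset.range n, bterm x' k) + ∑' k, bterm x' (k + n) :=
      binary_split x' n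
    have h2 : ∑' k, bterm x' (k + n) = bterm x' n + ∑' k, bterm x' (k + 1 + n) := by
      rw [Summable.tsum_eq_zero_add (summable_bterm_shift x' n)]
      simp
    have h3 : ∑' k, bterm x' (k + 1 + n) ≤ (2⁻¹ : ℝ) ^ (n + 1) := by
      have : ∀ k, k + 1 + n = k + (n + 1) := by omega
      simp_rw [this]
      exact tail_le x' (n + 1)
    have h4 : bterm x' n = 0 := by unfold bterm; rw [hx'n]; simp
    rw [h1, h2, h4, hps]
    linarith
  -- lower bound for binaryVal x
  have hxlow : (∑ k ∈ Finset.range n, bterm x k) + (2⁻¹ : ℝ) ^ (n + 1) + (2⁻¹ : ℝ) ^ (j + 1)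
      ≤ binaryVal x := by
    have h5 : (∑ k ∈ Finset.range (j + 1), bterm x k) ≤ binaryVal x := partial_le_binary x _
    have h6 : (∑ k ∈ Finset.range (j + 1), bterm x k) =
        (∑ k ∈ Finset.range n, bterm x k) + (∑ k ∈ Finset.Ico n (j + 1), bterm x k) := by
      rw [Finset.range_eq_Ico,
        ← Finset.sum_Ico_consecutive _ (Nat.zero_le n) (show n ≤ j+1 by omega),
        ← Finset.range_eq_Ico]
    have h7 : bterm x n + bterm x j ≤ ∑ k ∈ Finset.Ico n (j + 1), bterm x k := by
      have : ({n, j} : Finset ℕ) ⊆ Finset.Ico n (j + 1) := by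
        intro k hk; simp at hk; rcases hk with rfl | rfl <;> simp [Finset.mem_Ico] <;> omega
      calc bterm x n + bterm x j = ∑ k ∈ ({n, j} : Finset ℕ), bterm x k := by
            rw [Finset.sum_pair (by omega)]
        _ ≤ _ := Finset.sum_le_sum_of_subset_of_nonneg this
            (fun k _ _ => bterm_nonneg x k)
    have h8 : bterm x n = (2⁻¹ : ℝ) ^ (n + 1) := by unfold bterm; rw [hxn]; simp
    have h9 : bterm x j = (2⁻¹ : ℝ) ^ (j + 1) := by unfold bterm; rw [hxj]; simp
    rw [h8, h9] at h7
    linarith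
  linarith

/-- Key upper estimate: if `x` and `x'` agree below `n`, `x n = false`, `x' n = true`,
and `x j = false` for some `j > n`, then `binaryVal x + 2⁻ʲ⁻¹ ≤ binaryVal x'`. -/
lemma keyHigh {x x' : ℕ → Bool} {n j : ℕ} (hagree : ∀ k < n, x' k = x k)
    (hxn : x n = false) (hx'n : x' n = true) (hnj : n < j) (hxj : x j = false) :
    binaryVal x + (2⁻¹ : ℝ) ^ (j + 1) ≤ binaryVal x' := by
  have hps : (∑ k ∈ Finset.range n, bterm x' k) = ∑ k ∈ Finset.range n, bterm x k :=
    Finset.sum_congr rfl (fun k hk => by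
      unfold bterm; rw [hagree k (Finset.mem_range.1 hk)])
  -- lower bound for binaryVal x'
  have hx'low : (∑ k ∈ Finset.range n, bterm x k) + (2⁻¹ : ℝ) ^ (n + 1) ≤ binaryVal x' := by
    have h5 : (∑ k ∈ Finset.range (n + 1), bterm x' k) ≤ binaryVal x' := partial_le_binary x' _
    rw [Finset.sum_range_succ, hps] at h5
    have h8 : bterm x' n = (2⁻¹ : ℝ) ^ (n + 1) := by unfold bterm; rw [hx'n]; simp
    rw [h8] at h5
    exact h5
  -- upper bound for binaryVal x
  have hxup : binaryVal x ≤ (∑ k ∈ Finset.range n, bterm x k)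
      + ((2⁻¹ : ℝ) ^ (n + 1) - (2⁻¹ : ℝ) ^ (j + 1)) := by
    have h1 : binaryVal x = (∑ k ∈ Finset.range n, bterm x k) + ∑' k, bterm x (k + n) :=
      binary_split x n
    have h2 : ∑' k, bterm x (k + n) = bterm x n + ∑' k, bterm x (k + 1 + n) := by
      rw [Summable.tsum_eq_zero_add (summable_bterm_shift x n)]
      simp
    have h4 : bterm x n = 0 := by unfold bterm; rw [hxn]; simp
    -- bound the tail above, taking into account the zero at position j
    have h3 : ∑' k, bterm x (k + 1 + n) ≤ (2⁻¹ : ℝ) ^ (n + 1) - (2⁻¹ : ℝ) ^ (j + 1) := by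
      set g : ℕ → ℝ := fun k => (2⁻¹ : ℝ) ^ (k + (n + 2))
      set e : ℕ → ℝ := fun k => if k + 1 + n = j then (2⁻¹ : ℝ) ^ (k + (n + 2)) else 0
      have hsg : Summable g := summable_shift_geo (n + 2)
      have hse : Summable e := by
        refine Summable.of_nonneg_of_le (fun k => ?_) (fun k => ?_) hsg
        · simp only [e]; split <;> positivity
        · simp only [e, g]; split <;> [exact le_rfl; positivity]
      have hle : ∀ k, bterm x (k + 1 + n) ≤ g k - e k := by
        intro k
        simp only [g, e]
        by_cases hkj : k + 1 + n = j
        · rw [if_pos hkj, hkj]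
          have hb : bterm x j = 0 := by unfold bterm; rw [hxj]; simp
          rw [hb]
          simp
        · rw [if_neg hkj, sub_zero]
          calc bterm x (k + 1 + n) ≤ (2⁻¹ : ℝ) ^ (k + 1 + n + 1) := bterm_le x _
            _ = (2⁻¹ : ℝ) ^ (k + (n + 2)) := by ring_nf
      have hsum : ∑' k, (g k - e k) = ((2⁻¹ : ℝ) ^ (n + 1) - (2⁻¹ : ℝ) ^ (j + 1)) := by
        rw [Summable.tsum_sub hsg hse]
        have hg : ∑' k, g k = (2⁻¹ : ℝ) ^ (n + 1) := by
          simp only [g]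
          rw [tsum_shift_geo (n + 2)]
          rw [pow_succ]
          ring
        have he : ∑' k, e k = (2⁻¹ : ℝ) ^ (j + 1) := by
          simp only [e]
          rw [tsum_eq_single (j - (n + 1)) (fun b hb => by
            rw [if_neg]; omega)]
          rw [if_pos (by omega)]
          congr 1
          omega
        rw [hg, he]
      calc ∑' k, bterm x (k + 1 + n) ≤ ∑' k, (g k - e k) :=
            Summable.tsum_le_tsum hle (by
              have : ∀ k, k + 1 + n = k + (n + 1) := by omega
              simp_rw [this]
              exact summable_bterm_shift x (n + 1)) (hsg.sub hse)
        _ = _ := hsum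
    rw [h1, h2, h4]
    linarith
  linarith

end Binary
section BinaryMore

/-- agreement of digits from closeness of values. -/
lemma binary_agree {x : ℕ → Bool} (hx : x ∈ Hset) (m : ℕ) :
    ∃ ε > (0:ℝ), ∀ x' ∈ Hset, |binaryVal x' - binaryVal x| < ε → ∀ k < m, x' k = x k := by
  obtain ⟨⟨jt, hjt1, hjt2⟩, ⟨jf, hjf1, hjf2⟩⟩ := hx m
  refine ⟨min ((2⁻¹:ℝ) ^ (jt + 1)) ((2⁻¹:ℝ) ^ (jf + 1)), by positivity, ?_⟩
  intro x' hx' hlt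
  by_contra hne
  push_neg at hne
  obtain ⟨k₀, hk₀m, hk₀⟩ := hne
  have hex : ∃ k, x' k ≠ x k := ⟨k₀, hk₀⟩
  classical
  set n := Nat.find hex with hn
  have hnk₀ : n ≤ k₀ := Nat.find_min' hex hk₀
  have hnm : n < m := lt_of_le_of_lt hnk₀ hk₀m
  have hagree : ∀ k < n, x' k = x k := fun k hk => by
    have := Nat.find_min hex hk
    simpa using this
  have hdiff : x' n ≠ x n := Nat.find_spec hex
  rcases Bool.eq_false_or_eq_true (x n) with hxn | hxn'
  · -- x n = true, so x' n = false; use keyLow with jt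
    have hx'n : x' n = false := by
      cases hcase : x' n
      · rfl
      · exact absurd (hcase.trans hxn.symm) hdiff
    have := keyLow hagree hxn hx'n (lt_of_lt_of_le hnm hjt1) hjt2
    have hε : min ((2⁻¹:ℝ) ^ (jt + 1)) ((2⁻¹:ℝ) ^ (jf + 1)) ≤ (2⁻¹:ℝ) ^ (jt + 1) :=
      min_le_left _ _
    rw [abs_lt] at hlt
    linarith
  · -- x n = false, so x' n = true; use keyHigh with jf
    have hxn : x n = false := hxn'
    have hx'n : x' n = true := by
      cases hcase : x' n
      · exact absurd (hcase.trans hxn.symm) hdiff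
      · rfl
    have := keyHigh hagree hxn hx'n (lt_of_lt_of_le hnm hjf1) hjf2
    have hε : min ((2⁻¹:ℝ) ^ (jt + 1)) ((2⁻¹:ℝ) ^ (jf + 1)) ≤ (2⁻¹:ℝ) ^ (jf + 1) :=
      min_le_right _ _
    rw [abs_lt] at hlt
    linarith

lemma binary_injOn : Set.InjOn binaryVal Hset := by
  intro x hx x' hx' heq
  funext k
  obtain ⟨ε, hε, hagree⟩ := binary_agree hx (k + 1)
  have := hagree x' hx' (by rw [heq.symm]; simpa using hε) k (by omega)
  exact this.symm ▸ rfl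

lemma binary_mem_Ioo {x : ℕ → Bool} (hx : x ∈ Hset) : binaryVal x ∈ Set.Ioo (0:ℝ) 1 := by
  obtain ⟨⟨jt, _, hjt⟩, ⟨jf, _, hjf⟩⟩ := hx 0
  constructor
  · have h1 : bterm x jt ≤ binaryVal x :=
      Summable.le_tsum (summable_bterm x) jt (fun j _ => bterm_nonneg x j)
    have h2 : bterm x jt = (2⁻¹:ℝ) ^ (jt + 1) := by unfold bterm; rw [hjt]; simp
    have : (0:ℝ) < (2⁻¹:ℝ) ^ (jt + 1) := by positivity
    linarith
  · -- binaryVal x ≤ 1 - 2^{-jf-1} < 1, using x jf = false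
    have h1 : binaryVal x ≤ (∑ k ∈ Finset.range jf, bterm x k) + ((2⁻¹:ℝ) ^ (jf + 1)) := by
      have h2 : binaryVal x = (∑ k ∈ Finset.range jf, bterm x k) + ∑' k, bterm x (k + jf) :=
        binary_split x jf
      have h3 : ∑' k, bterm x (k + jf) = bterm x jf + ∑' k, bterm x (k + 1 + jf) := by
        rw [Summable.tsum_eq_zero_add (summable_bterm_shift x jf)]; simp
      have h4 : bterm x jf = 0 := by unfold bterm; rw [hjf]; simp
      have h5 : ∑' k, bterm x (k + 1 + jf) ≤ (2⁻¹:ℝ) ^ (jf + 1) := by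
        have : ∀ k, k + 1 + jf = k + (jf + 1) := by omega
        simp_rw [this]
        exact tail_le x (jf + 1)
      rw [h2, h3, h4]
      linarith
    have h6 : (∑ k ∈ Finset.range jf, bterm x k) ≤ ∑ k ∈ Finset.range jf, (2⁻¹:ℝ) ^ (k+1) :=
      Finset.sum_le_sum (fun k _ => bterm_le x k)
    have h7 : ∀ N : ℕ, (∑ k ∈ Finset.range N, (2⁻¹:ℝ) ^ (k+1)) = 1 - (2⁻¹:ℝ) ^ N := by
      intro N
      induction N with
      | zero => simp
      | succ N ih => rw [Finset.sum_range_succ, ih, pow_succ]; ring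
    rw [h7 jf] at h6
    have h8 : (0:ℝ) < (2⁻¹:ℝ) ^ (jf+1) := by positivity
    have h9 : (2⁻¹:ℝ) ^ (jf + 1) < (2⁻¹:ℝ) ^ jf := by
      rw [pow_succ]
      nlinarith [pow_pos (show (0:ℝ) < 2⁻¹ by norm_num) jf]
    linarith

lemma binary_close {x x' : ℕ → Bool} {n : ℕ} (hagree : ∀ k < n, x' k = x k) :
    |binaryVal x' - binaryVal x| ≤ (2⁻¹:ℝ) ^ n := by
  have hps : (∑ k ∈ Finset.range n, bterm x' k) = ∑ k ∈ Finset.range n, bterm x k :=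
    Finset.sum_congr rfl (fun k hk => by
      unfold bterm; rw [hagree k (Finset.mem_range.1 hk)])
  have h1 := binary_split x n
  have h2 := binary_split x' n
  have h3 := tail_le x n
  have h4 := tail_nonneg x n
  have h5 := tail_le x' n
  have h6 := tail_nonneg x' n
  rw [abs_le]
  constructor <;> [skip; skip] <;> (rw [h1, h2, hps]; linarith)

lemma binary_continuous : Continuous binaryVal := by
  rw [continuous_iff_continuousAt]
  intro x
  rw [ContinuousAt, Metric.tendsto_nhds]
  intro ε hε
  obtain ⟨n, hn⟩ : ∃ n : ℕ, (2⁻¹:ℝ) ^ n < ε := exists_pow_lt_of_lt_one hε (by norm_num)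
  have hopen : IsOpen {x' : ℕ → Bool | ∀ k ∈ Finset.range n, x' k = x k} := by
    have : {x' : ℕ → Bool | ∀ k ∈ Finset.range n, x' k = x k} =
        ⋂ k ∈ Finset.range n, (fun x' : ℕ → Bool => x' k) ⁻¹' {x k} := by
      ext x'; simp
    rw [this]
    exact isOpen_biInter_finset (fun k _ =>
      (continuous_apply k).isOpen_preimage _ (isOpen_discrete _))
  have hmem : x ∈ {x' : ℕ → Bool | ∀ k ∈ Finset.range n, x' k = x k} := fun k _ => rfl
  filter_upwards [hopen.mem_nhds hmem] with x' hx'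
  have : |binaryVal x' - binaryVal x| ≤ (2⁻¹:ℝ) ^ n :=
    binary_close (fun k hk => hx' k (Finset.mem_range.2 hk))
  rw [Real.dist_eq]
  linarith

end BinaryMore
section Digits

def DyadicSet : Set ℝ := {y | ∃ (n : ℕ) (k : ℤ), y = (k : ℝ) / 2 ^ n}

lemma dyadic_countable : DyadicSet.Countable := by
  have : DyadicSet ⊆ Set.range (fun p : ℕ × ℤ => ((p.2 : ℝ) / 2 ^ p.1)) := by
    rintro y ⟨n, k, rfl⟩; exact ⟨(n, k), rfl⟩
  exact (Set.countable_range _).mono this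

noncomputable def remSeq (y : ℝ) : ℕ → ℝ
  | 0 => y
  | n + 1 => 2 * remSeq y n - (if (2⁻¹:ℝ) ≤ remSeq y n then 1 else 0)

noncomputable def digitSeq (y : ℝ) (n : ℕ) : Bool := decide ((2⁻¹:ℝ) ≤ remSeq y n)

variable {y : ℝ} (hy : y ∈ Set.Ioo (0:ℝ) 1) (hnd : y ∉ DyadicSet)

lemma remSeq_int (n : ℕ) : ∃ k : ℤ, remSeq y n = 2 ^ n * y - k := by
  induction n with
  | zero => exact ⟨0, by simp [remSeq]⟩
  | succ n ih =>
    obtain ⟨k, hk⟩ := ih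
    by_cases h : (2⁻¹:ℝ) ≤ remSeq y n
    · exact ⟨2 * k + 1, by rw [remSeq, if_pos h, hk]; push_cast; ring⟩
    · exact ⟨2 * k, by rw [remSeq, if_neg h, hk]; push_cast; ring⟩

include hy hnd in
lemma remSeq_mem (n : ℕ) : 0 < remSeq y n ∧ remSeq y n < 1 := by
  induction n with
  | zero => exact ⟨hy.1, hy.2⟩
  | succ n ih =>
    obtain ⟨h0, h1⟩ := ih
    by_cases h : (2⁻¹:ℝ) ≤ remSeq y n
    · rw [remSeq, if_pos h]
      constructor
      · -- need remSeq y n > 1/2 strictly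
        rcases lt_or_eq_of_le h with h' | h'
        · linarith
        · exfalso
          obtain ⟨k, hk⟩ := remSeq_int (y := y) n
          apply hnd
          refine ⟨n + 1, 2 * k + 1, ?_⟩
          rw [← h'] at hk
          rw [eq_div_iff (show ((2:ℝ) ^ (n+1)) ≠ 0 by positivity)]
          push_cast
          linear_combination (-2:ℝ) * hk
      · linarith
    · rw [remSeq, if_neg h]
      push_neg at h
      constructor <;> linarith

lemma digit_expand (n : ℕ) :
    y = (∑ k ∈ Finset.range n, bterm (digitSeq y) k) + remSeq y n * (2⁻¹:ℝ) ^ n := by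
  induction n with
  | zero => simp [remSeq]
  | succ n ih =>
    rw [Finset.sum_range_succ]
    have hd : bterm (digitSeq y) n + remSeq y (n+1) * (2⁻¹:ℝ) ^ (n+1)
        = remSeq y n * (2⁻¹:ℝ) ^ n := by
      by_cases h : (2⁻¹:ℝ) ≤ remSeq y n
      · have hdig : digitSeq y n = true := decide_eq_true h
        unfold bterm
        rw [hdig, if_pos rfl, remSeq, if_pos h, pow_succ]
        ring
      · have hdig : digitSeq y n = false := decide_eq_false h
        unfold bterm
        rw [hdig, remSeq, if_neg h]
        simp only [Bool.false_eq_true, if_false]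
        rw [pow_succ]
        ring
    linarith [ih, hd]

include hy hnd in
lemma binary_digitSeq : binaryVal (digitSeq y) = y := by
  have hs := summable_bterm (digitSeq y)
  have h1 : Filter.Tendsto (fun n => ∑ k ∈ Finset.range n, bterm (digitSeq y) k)
      Filter.atTop (nhds (binaryVal (digitSeq y))) := hs.hasSum.tendsto_sum_nat
  have h2 : Filter.Tendsto (fun n => ∑ k ∈ Finset.range n, bterm (digitSeq y) k)
      Filter.atTop (nhds y) := by
    have heq : ∀ n, (∑ k ∈ Finset.range n, bterm (digitSeq y) k)
        = y - remSeq y n * (2⁻¹:ℝ) ^ n := by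
      intro n; have := digit_expand (y := y) n; linarith
    simp_rw [heq]
    have h3 : Filter.Tendsto (fun n : ℕ => remSeq y n * (2⁻¹:ℝ) ^ n) Filter.atTop (nhds 0) := by
      refine squeeze_zero (g := fun n : ℕ => (2⁻¹:ℝ) ^ n) (fun n => ?_) (fun n => ?_)
        (tendsto_pow_atTop_nhds_zero_of_lt_one (by norm_num) (by norm_num))
      · exact le_of_lt (mul_pos (remSeq_mem hy hnd n).1 (by positivity))
      · have := remSeq_mem hy hnd n
        nlinarith [pow_pos (show (0:ℝ) < 2⁻¹ by norm_num) n]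
    have := Filter.Tendsto.sub (tendsto_const_nhds (x := y)) h3
    simpa using this
  exact tendsto_nhds_unique h1 h2

include hy hnd in
lemma digitSeq_mem_Hset : digitSeq y ∈ Hset := by
  intro N
  constructor
  · -- infinitely many trues
    by_contra h
    push_neg at h
    have hfalse : ∀ k, N ≤ k → digitSeq y k = false := by
      intro k hk
      cases hc : digitSeq y k
      · rfl
      · exact absurd hc (h k hk)
    have hdouble : ∀ p : ℕ, remSeq y (N + p) = 2 ^ p * remSeq y N := by
      intro p
      induction p with
      | zero => simp
      | succ p ih =>
        have hf : digitSeq y (N + p) = false := hfalse _ (by omega)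
        have hnot : ¬ ((2⁻¹:ℝ) ≤ remSeq y (N + p)) := by
          intro hle
          rw [digitSeq, decide_eq_true hle] at hf
          exact Bool.noConfusion hf
        have : N + (p + 1) = (N + p) + 1 := by omega
        rw [this, remSeq, if_neg hnot, ih, pow_succ]
        ring
    obtain ⟨p, hp⟩ := pow_unbounded_of_one_lt (R := ℝ) (1 / remSeq y N) (by norm_num : (1:ℝ) < 2)
    have h0 := (remSeq_mem hy hnd N).1
    have h1 := (remSeq_mem hy hnd (N + p)).2
    rw [hdouble p] at h1
    rw [div_lt_iff₀ h0] at hp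
    nlinarith
  · -- infinitely many falses
    by_contra h
    push_neg at h
    have htrue : ∀ k, N ≤ k → digitSeq y k = true := by
      intro k hk
      cases hc : digitSeq y k
      · exact absurd hc (h k hk)
      · rfl
    have hdouble : ∀ p : ℕ, 1 - remSeq y (N + p) = 2 ^ p * (1 - remSeq y N) := by
      intro p
      induction p with
      | zero => simp
      | succ p ih =>
        have hf : digitSeq y (N + p) = true := htrue _ (by omega)
        have hle : (2⁻¹:ℝ) ≤ remSeq y (N + p) := by
          by_contra hc
          rw [digitSeq, decide_eq_false hc] at hf
          exact Bool.noConfusion hf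
        have : N + (p + 1) = (N + p) + 1 := by omega
        rw [this, remSeq, if_pos hle]
        rw [pow_succ]
        nlinarith [ih]
    obtain ⟨p, hp⟩ := pow_unbounded_of_one_lt (R := ℝ) (1 / (1 - remSeq y N))
      (by norm_num : (1:ℝ) < 2)
    have h0 := (remSeq_mem hy hnd N).2
    have h1 := (remSeq_mem hy hnd (N + p)).1
    have h2 := hdouble p
    rw [div_lt_iff₀ (by linarith)] at hp
    nlinarith

/-- every non-dyadic point of `(0,1)` is in the image of `Hset` under `binaryVal`. -/
lemma surj_nondyadic : Set.Ioo (0:ℝ) 1 \ DyadicSet ⊆ binaryVal '' Hset := by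
  rintro y ⟨hy, hnd⟩
  exact ⟨digitSeq y, digitSeq_mem_Hset hy hnd, binary_digitSeq hy hnd⟩

end Digits
section HsetTop

lemma Hset_dense : Dense Hset := by
  intro x
  rw [mem_closure_iff]
  intro U hU hxU
  obtain ⟨I, u, hu, hsub⟩ := isOpen_pi_iff.1 hU x hxU
  classical
  set M := (I.sup id) + 1 with hM
  have hIM : ∀ k ∈ I, k < M := fun k hk => by
    have : k ≤ I.sup id := Finset.le_sup (f := id) hk
    omega
  set x' : ℕ → Bool := fun k => if k ∈ I then x k else decide (k % 2 = 0) with hx'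
  refine ⟨x', ?_, ?_⟩
  · apply hsub
    intro k hk
    have hk' : k ∈ I := hk
    simp only [hx']
    rw [if_pos hk']
    exact (hu k hk).2
  · intro N
    constructor
    · refine ⟨2 * (N + M), by omega, ?_⟩
      have hnotI : 2 * (N + M) ∉ I := fun hmem => by have := hIM _ hmem; omega
      simp only [hx']
      rw [if_neg hnotI]
      rw [decide_eq_true_eq]
      omega
    · refine ⟨2 * (N + M) + 1, by omega, ?_⟩
      have hnotI : 2 * (N + M) + 1 ∉ I := fun hmem => by have := hIM _ hmem; omega
      simp only [hx']
      rw [if_neg hnotI]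
      rw [decide_eq_false_iff_not]
      omega

lemma eventually_const_nwd (c : Bool) (N : ℕ) :
    IsNowhereDense {x : ℕ → Bool | ∀ k, N ≤ k → x k = c} := by
  set S := {x : ℕ → Bool | ∀ k, N ≤ k → x k = c} with hS
  have hclosed : IsClosed S := by
    have : S = ⋂ (k : ℕ), ⋂ (_ : N ≤ k), (fun x : ℕ → Bool => x k) ⁻¹' {c} := by
      ext x; simp [hS]
    rw [this]
    exact isClosed_iInter (fun k => isClosed_iInter (fun _ =>
      IsClosed.preimage (continuous_apply k) (isClosed_discrete _)))
  rw [hclosed.isNowhereDense_iff]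
  rw [Set.eq_empty_iff_forall_notMem]
  intro x hx
  obtain ⟨I, u, hu, hsub⟩ := isOpen_pi_iff.1 isOpen_interior x hx
  classical
  set M := (I.sup id) + N + 1 with hM
  have hnotI : M ∉ I := fun hmem => by
    have : M ≤ I.sup id := Finset.le_sup (f := id) hmem
    omega
  set x' : ℕ → Bool := fun k => if k = M then ! (x k) else x k with hx'
  have hx'mem : x' ∈ (I : Set ℕ).pi u := by
    intro k hk
    have : (k : ℕ) ≠ M := fun h => hnotI (h ▸ hk)
    simp only [hx', if_neg this]
    exact (hu k hk).2
  have hx'S : x' ∈ S := interior_subset (hsub hx'mem)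
  have hxS : x ∈ S := interior_subset hx
  have h1 : x' M = c := hx'S M (by omega)
  have h2 : x M = c := hxS M (by omega)
  simp only [hx', if_pos rfl] at h1
  rw [h2] at h1
  exact absurd h1 (by cases c <;> simp)

lemma Hset_compl_meagre : IsMeagre Hsetᶜ := by
  rw [isMeagre_iff_countable_union_isNowhereDense]
  refine ⟨{S | ∃ (c : Bool) (N : ℕ), S = {x : ℕ → Bool | ∀ k, N ≤ k → x k = c}}, ?_, ?_, ?_⟩
  · rintro S ⟨c, N, rfl⟩
    exact eventually_const_nwd c N
  · have : {S | ∃ (c : Bool) (N : ℕ), S = {x : ℕ → Bool | ∀ k, N ≤ k → x k = c}} ⊆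
        Set.range (fun p : Bool × ℕ => {x : ℕ → Bool | ∀ k, p.2 ≤ k → x k = p.1}) := by
      rintro S ⟨c, N, rfl⟩; exact ⟨(c, N), rfl⟩
    exact (Set.countable_range _).mono this
  · intro x hx
    simp only [Hset, Set.mem_compl_iff, Set.mem_setOf_eq] at hx
    rw [not_forall] at hx
    obtain ⟨N, hN⟩ := hx
    rw [not_and_or] at hN
    rcases hN with h | h
    · -- no k ≥ N with x k = true, so x k = false for k ≥ N
      push_neg at h
      refine ⟨{x' : ℕ → Bool | ∀ k, N ≤ k → x' k = false}, ⟨false, N, rfl⟩, ?_⟩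
      intro k hk
      cases hc : x k
      · rfl
      · exact absurd hc (h k hk)
    · push_neg at h
      refine ⟨{x' : ℕ → Bool | ∀ k, N ≤ k → x' k = true}, ⟨true, N, rfl⟩, ?_⟩
      intro k hk
      cases hc : x k
      · exact absurd hc (h k hk)
      · rfl

end HsetTop

section Gmap

noncomputable def bmap (a b : ℝ) (x : ℕ → Bool) : ℝ := (b - a) * binaryVal x + a

def Gset (a b : ℝ) : Set ℝ := bmap a b '' Hset

variable {a b : ℝ}

lemma bmap_continuous : Continuous (bmap a b) := by
  unfold bmap
  exact (continuous_const.mul binary_continuous).add continuous_const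

lemma bmap_injOn (hab : a < b) : Set.InjOn (bmap a b) Hset := by
  intro x hx x' hx' h
  unfold bmap at h
  have : binaryVal x = binaryVal x' := by
    have hba : b - a ≠ 0 := ne_of_gt (by linarith)
    have h' : (b - a) * binaryVal x = (b - a) * binaryVal x' := by linarith
    exact mul_left_cancel₀ hba h'
  exact binary_injOn hx hx' this

lemma Gset_subset_Ioo (hab : a < b) : Gset a b ⊆ Set.Ioo a b := by
  rintro _ ⟨x, hx, rfl⟩
  have h := binary_mem_Ioo hx
  unfold bmap
  constructor <;> nlinarith [h.1, h.2]

lemma Ioo_diff_subset_Gset (hab : a < b) :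
    Set.Ioo a b \ ((fun t => (b - a) * t + a) '' DyadicSet) ⊆ Gset a b := by
  rintro y ⟨hy, hnd⟩
  have hba : (0:ℝ) < b - a := by linarith
  set u := (y - a) / (b - a) with hu
  have huI : u ∈ Set.Ioo (0:ℝ) 1 := by
    constructor
    · apply div_pos (by linarith [hy.1]) hba
    · rw [div_lt_one hba]; linarith [hy.2]
  have hund : u ∉ DyadicSet := by
    intro hmem
    apply hnd
    refine ⟨u, hmem, ?_⟩
    show (b - a) * u + a = y
    rw [hu]
    field_simp
    ring
  obtain ⟨x, hx, hxu⟩ := surj_nondyadic ⟨huI, hund⟩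
  refine ⟨x, hx, ?_⟩
  unfold bmap
  rw [hxu, hu]
  field_simp
  ring

lemma Gset_compl_countable (hab : a < b) : (Set.Ioo a b \ Gset a b).Countable := by
  have hsub : Set.Ioo a b \ Gset a b ⊆ (fun t => (b - a) * t + a) '' DyadicSet := by
    intro y hy
    by_contra h
    exact hy.2 (Ioo_diff_subset_Gset hab ⟨hy.1, h⟩)
  exact (dyadic_countable.image _).mono hsub

lemma Gset_dense_Ioo (hab : a < b) : Set.Ioo a b ⊆ closure (Gset a b) := by
  have hD : Dense ((fun t : ℝ => (b - a) * t + a) '' DyadicSet)ᶜ :=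
    Set.Countable.dense_compl ℝ (dyadic_countable.image _)
  have h1 : Set.Ioo a b ⊆
      closure (Set.Ioo a b ∩ ((fun t : ℝ => (b - a) * t + a) '' DyadicSet)ᶜ) :=
    hD.open_subset_closure_inter isOpen_Ioo
  refine h1.trans (closure_mono ?_)
  rintro y ⟨hy1, hy2⟩
  exact Ioo_diff_subset_Gset hab ⟨hy1, hy2⟩

noncomputable def cantorEquiv (hab : a < b) : ↥Hset ≃ ↥(Gset a b) :=
  Equiv.ofBijective (fun x => ⟨bmap a b x.1, Set.mem_image_of_mem _ x.2⟩)
    (by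
      constructor
      · intro x x' h
        replace h := congrArg Subtype.val h
        exact Subtype.ext (bmap_injOn hab x.2 x'.2 h)
      · rintro ⟨y, hy⟩
        obtain ⟨x, hx, rfl⟩ := hy
        exact ⟨⟨x, hx⟩, rfl⟩)

lemma cantorEquiv_coe (hab : a < b) (x : ↥Hset) :
    ((cantorEquiv hab x : ↥(Gset a b)) : ℝ) = bmap a b x.1 := rfl

noncomputable def cantorHomeo (hab : a < b) : ↥Hset ≃ₜ ↥(Gset a b) where
  toEquiv := cantorEquiv hab
  continuous_toFun := Continuous.subtype_mk (bmap_continuous.comp continuous_subtype_val) _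
  continuous_invFun := by
    have hba : (0:ℝ) < b - a := by linarith
    have key : Continuous (fun yy : ↥(Gset a b) =>
        (((cantorEquiv hab).symm yy : ↥Hset) : ℕ → Bool)) := by
      rw [continuous_pi_iff]
      intro n
      rw [continuous_iff_continuousAt]
      intro y₀
      set x₀ := (cantorEquiv hab).symm y₀ with hx₀
      obtain ⟨ε, hε, hagree⟩ := binary_agree x₀.2 (n + 1)
      apply Filter.EventuallyEq.continuousAt (y := (x₀ : ℕ → Bool) n)
      have hball : ∀ᶠ z in nhds (y₀ : ℝ), |z - (y₀ : ℝ)| < (b - a) * ε := by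
        filter_upwards [Metric.ball_mem_nhds (y₀ : ℝ) (mul_pos hba hε)] with z hz
        rw [Metric.mem_ball, Real.dist_eq] at hz
        exact hz
      have hev : ∀ᶠ yy : ↥(Gset a b) in nhds y₀, |((yy : ℝ)) - (y₀ : ℝ)| < (b - a) * ε :=
        (continuousAt_subtype_val (x := y₀)).eventually hball
      filter_upwards [hev] with yy hyy
      set x' := (cantorEquiv hab).symm yy with hx'
      have h1 : bmap a b (x' : ℕ → Bool) = (yy : ℝ) := by
        rw [hx', ← cantorEquiv_coe hab, Equiv.apply_symm_apply]
      have h2 : bmap a b (x₀ : ℕ → Bool) = (y₀ : ℝ) := by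
        rw [hx₀, ← cantorEquiv_coe hab, Equiv.apply_symm_apply]
      have h3 : |binaryVal (x' : ℕ → Bool) - binaryVal (x₀ : ℕ → Bool)| < ε := by
        have : (yy : ℝ) - (y₀ : ℝ)
            = (b - a) * (binaryVal (x' : ℕ → Bool) - binaryVal (x₀ : ℕ → Bool)) := by
          rw [← h1, ← h2]; unfold bmap; ring
        rw [this, abs_mul, abs_of_pos hba] at hyy
        exact (mul_lt_mul_iff_right₀ hba).1 hyy
      exact hagree (x' : ℕ → Bool) x'.2 h3 n (by omega)
    exact Continuous.subtype_mk key _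

end Gmap
section Part8
open TopologicalSpace

lemma IsNowhereDense.isMeagre' {X : Type*} [TopologicalSpace X] {t : Set X}
    (h : IsNowhereDense t) : IsMeagre t := by
  rw [isMeagre_iff_countable_union_isNowhereDense]
  exact ⟨{t}, by simpa using h, Set.countable_singleton t, by simp⟩

lemma countable_isMeagre_real {C : Set ℝ} (hC : C.Countable) : IsMeagre C := by
  have : C = ⋃ c ∈ C, {c} := by simp
  rw [this]
  refine isMeagre_biUnion hC (fun c _ => ?_)
  refine IsNowhereDense.isMeagre' ?_
  rw [IsNowhereDense, closure_singleton]
  exact interior_singleton c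

lemma prod_left_meagre {C : Set ℝ} (hC : C.Countable) {J : Set ℝ} :
    IsMeagre (C ×ˢ J) := by
  have : C ×ˢ J = ⋃ c ∈ C, ({c} ×ˢ J) := by
    ext ⟨s, t⟩
    constructor
    · rintro ⟨hs, ht⟩; exact Set.mem_biUnion hs ⟨rfl, ht⟩
    · intro h
      obtain ⟨c, hc, h1, h2⟩ := Set.mem_iUnion₂.1 h
      exact ⟨h1 ▸ hc, h2⟩
  rw [this]
  refine isMeagre_biUnion hC (fun c _ => ?_)
  refine IsNowhereDense.isMeagre' ?_
  rw [IsNowhereDense, closure_prod_eq, closure_singleton]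
  rw [interior_prod_eq, interior_singleton]
  simp

lemma prod_right_meagre {C : Set ℝ} (hC : C.Countable) {J : Set ℝ} :
    IsMeagre (J ×ˢ C) := by
  have : J ×ˢ C = ⋃ c ∈ C, (J ×ˢ {c}) := by
    ext ⟨s, t⟩
    constructor
    · rintro ⟨hs, ht⟩; exact Set.mem_biUnion ht ⟨hs, rfl⟩
    · intro h
      obtain ⟨c, hc, h1, h2⟩ := Set.mem_iUnion₂.1 h
      exact ⟨h1, h2 ▸ hc⟩
  rw [this]
  refine isMeagre_biUnion hC (fun c _ => ?_)
  refine IsNowhereDense.isMeagre' ?_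
  rw [IsNowhereDense, closure_prod_eq, closure_singleton]
  rw [interior_prod_eq, interior_singleton]
  simp

lemma hasBP_homeo_image {A B : Type*} [TopologicalSpace A] [TopologicalSpace B]
    (e : A ≃ₜ B) {S : Set A} (h : HasBaireProperty S) : HasBaireProperty (e '' S) := by
  obtain ⟨U, M, hU, hM, rfl⟩ := h
  refine ⟨e '' U, e '' M, e.isOpenMap U hU, hM.homeo_image e, ?_⟩
  rw [Set.symmDiff_def, Set.symmDiff_def, Set.image_union,
    Set.image_diff e.injective, Set.image_diff e.injective]

/-- Localization: a set without the Baire property is completely non-Baire on some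
nonempty open set. -/
lemma localization {X : Type*} [TopologicalSpace X] [SecondCountableTopology X]
    {E : Set X} (hE : ¬ HasBaireProperty E) :
    ∃ V : Set X, IsOpen V ∧ V.Nonempty ∧
      ∀ U, IsOpen U → (U ∩ V).Nonempty →
        ¬ IsMeagre (E ∩ U ∩ V) ∧ ¬ IsMeagre (Eᶜ ∩ U ∩ V) := by
  obtain ⟨bas, hctble, hempty, hbasis⟩ := exists_countable_basis X
  classical
  set S1 : Set (Set X) := {B ∈ bas | IsMeagre (E ∩ B)} with hS1
  set S2 : Set (Set X) := {B ∈ bas | IsMeagre (Eᶜ ∩ B)} with hS2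
  set U1 := ⋃₀ S1 with hU1
  set U2 := ⋃₀ S2 with hU2
  have hU1open : IsOpen U1 := isOpen_sUnion (fun B hB => hbasis.isOpen hB.1)
  have hU2open : IsOpen U2 := isOpen_sUnion (fun B hB => hbasis.isOpen hB.1)
  have hm1 : IsMeagre (E ∩ U1) := by
    have : E ∩ U1 = ⋃ B ∈ S1, (E ∩ B) := by
      rw [hU1]; ext z; simp [Set.mem_sUnion]
    rw [this]
    exact isMeagre_biUnion (hctble.mono (Set.sep_subset _ _)) (fun B hB => hB.2)
  have hm2 : IsMeagre (Eᶜ ∩ U2) := by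
    have : Eᶜ ∩ U2 = ⋃ B ∈ S2, (Eᶜ ∩ B) := by
      rw [hU2]; ext z; simp [Set.mem_sUnion]
    rw [this]
    exact isMeagre_biUnion (hctble.mono (Set.sep_subset _ _)) (fun B hB => hB.2)
  set V := (closure (U1 ∪ U2))ᶜ with hV
  by_cases hVne : V.Nonempty
  · refine ⟨V, isClosed_closure.isOpen_compl, hVne, ?_⟩
    intro U hU hUV
    constructor
    · intro hmeag
      obtain ⟨x, hx⟩ := hUV
      obtain ⟨B, hBbas, hxB, hBsub⟩ :=
        hbasis.exists_subset_of_mem_open hx (hU.inter isClosed_closure.isOpen_compl)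
      have hBm : IsMeagre (E ∩ B) := by
        refine hmeag.mono ?_
        intro z hz
        exact ⟨⟨hz.1, (hBsub hz.2).1⟩, (hBsub hz.2).2⟩
      have hBU1 : B ⊆ U1 := Set.subset_sUnion_of_mem ⟨hBbas, hBm⟩
      have : x ∈ closure (U1 ∪ U2) := subset_closure (Or.inl (hBU1 hxB))
      exact hx.2 this
    · intro hmeag
      obtain ⟨x, hx⟩ := hUV
      obtain ⟨B, hBbas, hxB, hBsub⟩ :=
        hbasis.exists_subset_of_mem_open hx (hU.inter isClosed_closure.isOpen_compl)
      have hBm : IsMeagre (Eᶜ ∩ B) := by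
        refine hmeag.mono ?_
        intro z hz
        exact ⟨⟨hz.1, (hBsub hz.2).1⟩, (hBsub hz.2).2⟩
      have hBU2 : B ⊆ U2 := Set.subset_sUnion_of_mem ⟨hBbas, hBm⟩
      have : x ∈ closure (U1 ∪ U2) := subset_closure (Or.inr (hBU2 hxB))
      exact hx.2 this
  · -- V empty: U1 ∪ U2 is dense, hence E has the Baire property
    exfalso
    apply hE
    have hdense : closure (U1 ∪ U2) = Set.univ := by
      rw [Set.not_nonempty_iff_eq_empty] at hVne
      rw [hV] at hVne
      rw [← Set.compl_empty, ← hVne, compl_compl]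
    have hnwd : IsNowhereDense (U1 ∪ U2)ᶜ := by
      rw [IsNowhereDense, closure_eq_iff_isClosed.2 (hU1open.union hU2open).isClosed_compl,
        interior_compl, hdense]
      simp
    refine hasBP_of_symmDiff hU2open ?_
    have hsub : E ∆ U2 ⊆ (E ∩ U1) ∪ (Eᶜ ∩ U2) ∪ (U1 ∪ U2)ᶜ := by
      rintro z hz
      rcases hz with ⟨hzE, hzU2⟩ | ⟨hzU2, hzE⟩
      · by_cases hz1 : z ∈ U1
        · exact Or.inl (Or.inl ⟨hzE, hz1⟩)
        · exact Or.inr (fun hc => (by rcases hc with h | h; exact hz1 h; exact hzU2 h))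
      · exact Or.inl (Or.inr ⟨hzE, hzU2⟩)
    exact ((hm1.union' hm2).union' hnwd.isMeagre').mono hsub

end Part8
section Pull
variable {a b c d : ℝ}

noncomputable def prodHomeo (hab : a < b) (hcd : c < d) :
    ↥(Hset ×ˢ Hset) ≃ₜ ↥(Gset a b ×ˢ Gset c d) :=
  (Homeomorph.Set.prod Hset Hset).trans
    (((cantorHomeo hab).prodCongr (cantorHomeo hcd)).trans
      (Homeomorph.Set.prod (Gset a b) (Gset c d)).symm)

lemma prodHomeo_coe (hab : a < b) (hcd : c < d) (z : ↥(Hset ×ˢ Hset)) :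
    ((prodHomeo hab hcd z : ↥(Gset a b ×ˢ Gset c d)) : ℝ × ℝ)
      = (bmap a b (z : (ℕ → Bool) × (ℕ → Bool)).1, bmap c d (z : (ℕ → Bool) × (ℕ → Bool)).2) :=
  rfl

/-- forward meagre transfer for the two-dimensional coding map. -/
lemma meagre_pull₂ (hab : a < b) (hcd : c < d) {P : Set ((ℕ → Bool) × (ℕ → Bool))}
    (hP : P ⊆ Hset ×ˢ Hset) (hm : IsMeagre P) :
    IsMeagre ((fun z : (ℕ → Bool) × (ℕ → Bool) => (bmap a b z.1, bmap c d z.2)) '' P) := by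
  set Φ := fun z : (ℕ → Bool) × (ℕ → Bool) => (bmap a b z.1, bmap c d z.2) with hΦ
  have hHd : Dense (Hset ×ˢ Hset) := Hset_dense.prod Hset_dense
  have h1 : IsMeagre (Subtype.val ⁻¹' P : Set ↥(Hset ×ˢ Hset)) :=
    (isMeagre_transfer isOpen_univ (Set.subset_univ _) (by rw [hHd.closure_eq]) hP).1 hm
  have h2 : IsMeagre (prodHomeo hab hcd '' (Subtype.val ⁻¹' P)) :=
    h1.homeo_image _
  have hGsub : Gset a b ×ˢ Gset c d ⊆ Set.Ioo a b ×ˢ Set.Ioo c d :=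
    Set.prod_mono (Gset_subset_Ioo hab) (Gset_subset_Ioo hcd)
  have hGdense : Set.Ioo a b ×ˢ Set.Ioo c d ⊆ closure (Gset a b ×ˢ Gset c d) := by
    rw [closure_prod_eq]
    exact Set.prod_mono (Gset_dense_Ioo hab) (Gset_dense_Ioo hcd)
  have hIm : Φ '' P ⊆ Gset a b ×ˢ Gset c d := by
    rintro _ ⟨z, hz, rfl⟩
    exact ⟨⟨z.1, (hP hz).1, rfl⟩, ⟨z.2, (hP hz).2, rfl⟩⟩
  refine (isMeagre_transfer (isOpen_Ioo.prod isOpen_Ioo) hGsub hGdense hIm).2 ?_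
  have heq : (Subtype.val ⁻¹' (Φ '' P) : Set ↥(Gset a b ×ˢ Gset c d))
      = prodHomeo hab hcd '' (Subtype.val ⁻¹' P) := by
    ext w
    constructor
    · rintro hw
      obtain ⟨z, hz, hzw⟩ := hw
      have hzH : z ∈ Hset ×ˢ Hset := hP hz
      refine ⟨⟨z, hzH⟩, hz, ?_⟩
      apply Subtype.ext
      rw [prodHomeo_coe]
      exact hzw
    · rintro ⟨zz, hzz, rfl⟩
      exact ⟨(zz : (ℕ → Bool) × (ℕ → Bool)), hzz, (prodHomeo_coe hab hcd zz).symm⟩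
  rw [heq]
  exact h2

/-- forward meagre transfer for the one-dimensional coding map. -/
lemma meagre_pull₁ (hab : a < b) {P : Set (ℕ → Bool)}
    (hP : P ⊆ Hset) (hm : IsMeagre P) : IsMeagre (bmap a b '' P) := by
  have h1 : IsMeagre (Subtype.val ⁻¹' P : Set ↥Hset) :=
    (isMeagre_transfer isOpen_univ (Set.subset_univ _) (by rw [Hset_dense.closure_eq]) hP).1 hm
  have h2 : IsMeagre (cantorHomeo hab '' (Subtype.val ⁻¹' P)) := h1.homeo_image _
  have hIm : bmap a b '' P ⊆ Gset a b := by
    rintro _ ⟨z, hz, rfl⟩; exact ⟨z, hP hz, rfl⟩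
  refine (isMeagre_transfer isOpen_Ioo (Gset_subset_Ioo hab) (Gset_dense_Ioo hab) hIm).2 ?_
  have heq : (Subtype.val ⁻¹' (bmap a b '' P) : Set ↥(Gset a b))
      = cantorHomeo hab '' (Subtype.val ⁻¹' P) := by
    ext w
    constructor
    · rintro ⟨z, hz, hzw⟩
      exact ⟨⟨z, hP hz⟩, hz, Subtype.ext hzw⟩
    · rintro ⟨zz, hzz, rfl⟩
      exact ⟨(zz : ℕ → Bool), hzz, rfl⟩
  rw [heq]
  exact h2

end Pull

end Aux

theorem stmt_3 (hH : HypH) (F : ℝ × ℝ → ℝ) (hF : BaireSupMeasurable F) :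
    BaireFunction F := by
  classical
  intro W hW
  by_contra hEBP
  obtain ⟨V, hVopen, hVne, hVprop⟩ := localization hEBP
  obtain ⟨⟨p, q⟩, hpq⟩ := hVne
  obtain ⟨u, v, hu, hv, hpu, hqv, huv⟩ := isOpen_prod_iff.1 hVopen p q hpq
  obtain ⟨ra, hra, hball_u⟩ := Metric.isOpen_iff.1 hu p hpu
  obtain ⟨rb, hrb, hball_v⟩ := Metric.isOpen_iff.1 hv q hqv
  set a := p - ra with ha
  set b := p + ra with hb
  set c := q - rb with hc
  set d := q + rb with hd
  have hab : a < b := by rw [ha, hb]; linarith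
  have hcd : c < d := by rw [hc, hd]; linarith
  have hIu : Set.Ioo a b ⊆ u := by
    rw [ha, hb, ← Real.ball_eq_Ioo]; exact hball_u
  have hJv : Set.Ioo c d ⊆ v := by
    rw [hc, hd, ← Real.ball_eq_Ioo]; exact hball_v
  have hR : Set.Ioo a b ×ˢ Set.Ioo c d ⊆ V := fun z hz => huv ⟨hIu hz.1, hJv hz.2⟩
  set E := F ⁻¹' W with hEdef
  set Φ := fun z : (ℕ → Bool) × (ℕ → Bool) => (bmap a b z.1, bmap c d z.2) with hΦ
  -- membership characterizations of the relative-open images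
  have relOpen : ∀ (a' b' : ℝ) (hab' : a' < b') (u' : Set (ℕ → Bool)), IsOpen u' →
      ∃ O : Set ℝ, IsOpen O ∧
        (Subtype.val '' (cantorHomeo hab' '' (Subtype.val ⁻¹' u' : Set ↥Hset))
          = Gset a' b' ∩ O) := by
    intro a' b' hab' u' hu'
    have h₁ : IsOpen (cantorHomeo hab' '' (Subtype.val ⁻¹' u' : Set ↥Hset)) :=
      (Homeomorph.isOpenMap _) _ (continuous_subtype_val.isOpen_preimage _ hu')
    obtain ⟨O, hO, hOeq⟩ := isOpen_induced_iff.1 h₁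
    refine ⟨O, hO, ?_⟩
    rw [← hOeq, Subtype.image_preimage_coe]
  have memT : ∀ (a' b' : ℝ) (hab' : a' < b') (u' : Set (ℕ → Bool)) (t : ℝ),
      (t ∈ Subtype.val '' (cantorHomeo hab' '' (Subtype.val ⁻¹' u' : Set ↥Hset))
        ↔ ∃ x, x ∈ Hset ∧ x ∈ u' ∧ bmap a' b' x = t) := by
    intro a' b' hab' u' t
    constructor
    · rintro ⟨w, ⟨⟨x, hxH⟩, hxu, rfl⟩, rfl⟩
      exact ⟨x, hxH, hxu, (cantorEquiv_coe hab' ⟨x, hxH⟩).symm⟩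
    · rintro ⟨x, hxH, hxu, rfl⟩
      exact ⟨cantorHomeo hab' ⟨x, hxH⟩, ⟨⟨x, hxH⟩, hxu, rfl⟩, cantorEquiv_coe hab' ⟨x, hxH⟩⟩
  -- the key: sets pulled back from "completely nonmeagre on V" sets are nowhere meagre
  have keyNM : ∀ S : Set (ℝ × ℝ),
      (∀ U', IsOpen U' → (U' ∩ V).Nonempty → ¬ IsMeagre (S ∩ U' ∩ V)) →
      NowhereMeager {z : (ℕ → Bool) × (ℕ → Bool) | z.1 ∈ Hset ∧ z.2 ∈ Hset ∧ Φ z ∈ S} := by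
    intro S hS U hU hUne hmeag
    obtain ⟨⟨x₀, y₀⟩, hxy₀⟩ := hUne
    obtain ⟨u', v', hu', hv', hx₀, hy₀, hu'v'⟩ := isOpen_prod_iff.1 hU x₀ y₀ hxy₀
    set T₁ := Subtype.val '' (cantorHomeo hab '' (Subtype.val ⁻¹' u' : Set ↥Hset)) with hT₁def
    set T₂ := Subtype.val '' (cantorHomeo hcd '' (Subtype.val ⁻¹' v' : Set ↥Hset)) with hT₂def
    obtain ⟨O₁, hO₁, hT₁eq⟩ := relOpen a b hab u' hu'
    obtain ⟨O₂, hO₂, hT₂eq⟩ := relOpen c d hcd v' hv'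
    have hT₁ne : T₁.Nonempty := by
      obtain ⟨x, hxH, hxu⟩ := Hset_dense.exists_mem_open hu' ⟨x₀, hx₀⟩
      exact ⟨bmap a b x, (memT a b hab u' _).2 ⟨x, hxH, hxu, rfl⟩⟩
    have hT₂ne : T₂.Nonempty := by
      obtain ⟨y, hyH, hyv⟩ := Hset_dense.exists_mem_open hv' ⟨y₀, hy₀⟩
      exact ⟨bmap c d y, (memT c d hcd v' _).2 ⟨y, hyH, hyv, rfl⟩⟩
    set P := {z : (ℕ → Bool) × (ℕ → Bool) | z.1 ∈ Hset ∧ z.2 ∈ Hset ∧ Φ z ∈ S}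
      ∩ (u' ×ˢ v') with hPdef
    have hPsub : P ⊆ Hset ×ˢ Hset := fun z hz => ⟨hz.1.1, hz.1.2.1⟩
    have hPm : IsMeagre P := hmeag.mono (by intro z hz; exact ⟨hz.1, hu'v' hz.2⟩)
    have hImm : IsMeagre (Φ '' P) := meagre_pull₂ hab hcd hPsub hPm
    have hIm_eq : Φ '' P = S ∩ (T₁ ×ˢ T₂) := by
      ext ⟨s, t⟩
      constructor
      · rintro ⟨⟨zx, zy⟩, ⟨⟨hzH1, hzH2, hzS⟩, ⟨hzu, hzv⟩⟩, heq⟩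
        have hs : bmap a b zx = s := congrArg Prod.fst heq
        have ht : bmap c d zy = t := congrArg Prod.snd heq
        refine ⟨heq ▸ hzS, ?_, ?_⟩
        · exact (memT a b hab u' s).2 ⟨zx, hzH1, hzu, hs⟩
        · exact (memT c d hcd v' t).2 ⟨zy, hzH2, hzv, ht⟩
      · rintro ⟨hsS, hs1, ht2⟩
        obtain ⟨x, hxH, hxu, hxs⟩ := (memT a b hab u' s).1 hs1
        obtain ⟨y, hyH, hyv, hyt⟩ := (memT c d hcd v' t).1 ht2
        refine ⟨(x, y), ⟨⟨hxH, hyH, ?_⟩, ⟨hxu, hyv⟩⟩, ?_⟩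
        · show (bmap a b x, bmap c d y) ∈ S
          rw [hxs, hyt]; exact hsS
        · show (bmap a b x, bmap c d y) = (s, t)
          rw [hxs, hyt]
      -- end chase
    obtain ⟨s₁, hs₁⟩ := hT₁ne
    obtain ⟨s₂, hs₂⟩ := hT₂ne
    have hs₁' : s₁ ∈ Gset a b ∩ O₁ := by rw [hT₁def, hT₁eq] at hs₁; exact hs₁
    have hs₂' : s₂ ∈ Gset c d ∩ O₂ := by rw [hT₂def, hT₂eq] at hs₂; exact hs₂
    set Uo := (O₁ ×ˢ O₂) ∩ (Set.Ioo a b ×ˢ Set.Ioo c d) with hUodef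
    have hUoopen : IsOpen Uo := (hO₁.prod hO₂).inter (isOpen_Ioo.prod isOpen_Ioo)
    have hs₁I : s₁ ∈ Set.Ioo a b := Gset_subset_Ioo hab hs₁'.1
    have hs₂I : s₂ ∈ Set.Ioo c d := Gset_subset_Ioo hcd hs₂'.1
    have hUoV : (Uo ∩ V).Nonempty :=
      ⟨(s₁, s₂), ⟨⟨hs₁'.2, hs₂'.2⟩, ⟨hs₁I, hs₂I⟩⟩, hR ⟨hs₁I, hs₂I⟩⟩
    refine hS Uo hUoopen hUoV ?_
    have hcover : S ∩ Uo ∩ V ⊆ (S ∩ (T₁ ×ˢ T₂))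
        ∪ (((Set.Ioo a b \ Gset a b) ×ˢ (Set.univ : Set ℝ))
          ∪ ((Set.univ : Set ℝ) ×ˢ (Set.Ioo c d \ Gset c d))) := by
      rintro ⟨s, t⟩ ⟨⟨hzS, ⟨⟨h1, h2⟩, ⟨h3, h4⟩⟩⟩, _⟩
      by_cases hsG : s ∈ Gset a b
      · by_cases htG : t ∈ Gset c d
        · refine Or.inl ⟨hzS, ?_, ?_⟩
          · rw [hT₁def, hT₁eq]; exact ⟨hsG, h1⟩
          · rw [hT₂def, hT₂eq]; exact ⟨htG, h2⟩
        · exact Or.inr (Or.inr ⟨Set.mem_univ s, h4, htG⟩)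
      · exact Or.inr (Or.inl ⟨⟨h3, hsG⟩, Set.mem_univ t⟩)
    refine IsMeagre.mono hcover ?_
    refine IsMeagre.union' ?_ (IsMeagre.union' ?_ ?_)
    · rw [← hIm_eq]; exact hImm
    · exact prod_left_meagre (Gset_compl_countable hab)
    · exact prod_right_meagre (Gset_compl_countable hcd)
  -- apply the key lemma to E and Eᶜ
  set A := {z : (ℕ → Bool) × (ℕ → Bool) | z.1 ∈ Hset ∧ z.2 ∈ Hset ∧ Φ z ∈ E} with hAdef
  have hA : NowhereMeager A := keyNM E (fun U' hU' hne => (hVprop U' hU' hne).1)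
  have hAc : NowhereMeager Aᶜ := by
    intro U hU hne hmeag
    refine keyNM Eᶜ (fun U' hU' hne' => (hVprop U' hU' hne').2) U hU hne (hmeag.mono ?_)
    rintro z ⟨⟨h1, h2, h3⟩, h4⟩
    exact ⟨fun hc => h3 hc.2.2, h4⟩
  obtain ⟨f, hf⟩ := hH A hA hAc
  set T := {x : ℕ → Bool | (x, f x) ∈ A} with hTdef
  set Y₀ := Hset ∩ f ⁻¹' Hset with hY₀def
  have hTY₀ : T ⊆ Y₀ := fun x hx => ⟨hx.1, hx.2.1⟩
  have hY₀H : Y₀ ⊆ Hset := Set.inter_subset_left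
  have hY₀c : IsMeagre Y₀ᶜ := by
    rw [hY₀def, Set.compl_inter]
    refine Hset_compl_meagre.union' ?_
    rw [← Set.preimage_compl]
    exact Hset_compl_meagre.preimage_of_isOpenMap f.continuous f.isOpenMap
  set X₀ := bmap a b '' Y₀ with hX₀def
  have hX₀sub : X₀ ⊆ Gset a b := fun t ⟨x, hx, hxt⟩ => ⟨x, hY₀H hx, hxt⟩
  have hX₀BP : HasBaireProperty X₀ := by
    have heq : X₀ = (Set.Ioo a b \ (Set.Ioo a b \ Gset a b)) \ (bmap a b '' (Hset \ Y₀)) := by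
      ext t
      constructor
      · rintro ⟨x, hx, rfl⟩
        have htG : bmap a b x ∈ Gset a b := ⟨x, hY₀H hx, rfl⟩
        refine ⟨⟨Gset_subset_Ioo hab htG, fun hc => hc.2 htG⟩, ?_⟩
        rintro ⟨x', hx', heq'⟩
        have : x' = x := bmap_injOn hab hx'.1 (hY₀H hx) heq'
        exact hx'.2 (this ▸ hx)
      · rintro ⟨⟨htI, htG⟩, htIm⟩
        have htG' : t ∈ Gset a b := by
          by_contra hc
          exact htG ⟨htI, hc⟩
        obtain ⟨x, hxH, rfl⟩ := htG'
        refine ⟨x, ?_, rfl⟩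
        by_contra hc
        exact htIm ⟨x, ⟨hxH, hc⟩, rfl⟩
    rw [heq]
    refine HasBaireProperty.diff (HasBaireProperty.diff isOpen_Ioo.hasBaireProperty ?_) ?_
    · exact (countable_isMeagre_real (Gset_compl_countable hab)).hasBaireProperty
    · refine (meagre_pull₁ hab Set.diff_subset ?_).hasBaireProperty
      exact hY₀c.mono (fun x hx => hx.2)
  -- the witness function g
  set g : ℝ → ℝ := fun t =>
    if h : t ∈ X₀ then bmap c d (f ((cantorHomeo hab).symm ⟨t, hX₀sub h⟩)) else 0 with hgdef
  have hg_eq : ∀ x ∈ Y₀, g (bmap a b x) = bmap c d (f x) := by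
    intro x hx
    have hxH : x ∈ Hset := hY₀H hx
    have hmem : bmap a b x ∈ X₀ := ⟨x, hx, rfl⟩
    have hsub : (⟨bmap a b x, hX₀sub hmem⟩ : ↥(Gset a b)) = cantorHomeo hab ⟨x, hxH⟩ :=
      Subtype.ext (cantorEquiv_coe hab ⟨x, hxH⟩).symm
    have h2 : ((cantorHomeo hab).symm ⟨bmap a b x, hX₀sub hmem⟩) = ⟨x, hxH⟩ := by
      rw [hsub]
      exact Homeomorph.symm_apply_apply _ _
    simp only [hgdef]
    rw [dif_pos hmem, h2]
  have hg : BaireFunction g := by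
    intro O hO
    set ψ : ↥(Gset a b) → ℝ :=
      fun s => bmap c d (f ((cantorHomeo hab).symm s)) with hψdef
    have hψc : Continuous ψ :=
      bmap_continuous.comp ((f.continuous.comp
        (continuous_subtype_val.comp (cantorHomeo hab).symm.continuous)))
    obtain ⟨O₁, hO₁, hO₁eq⟩ := isOpen_induced_iff.1 (hψc.isOpen_preimage _ hO)
    have hpre : g ⁻¹' O = (O₁ ∩ X₀) ∪ (if (0:ℝ) ∈ O then X₀ᶜ else ∅) := by
      ext t
      by_cases ht : t ∈ X₀
      · have hgt : g t = ψ ⟨t, hX₀sub ht⟩ := by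
          simp only [hgdef]
          rw [dif_pos ht]
        simp only [Set.mem_preimage, Set.mem_union, Set.mem_inter_iff]
        constructor
        · intro hgO
          left
          refine ⟨?_, ht⟩
          have : (⟨t, hX₀sub ht⟩ : ↥(Gset a b)) ∈ ψ ⁻¹' O := by
            rw [Set.mem_preimage, ← hgt]; exact hgO
          rw [← hO₁eq] at this
          exact this
        · rintro (⟨h1, _⟩ | h2)
          · have : (⟨t, hX₀sub ht⟩ : ↥(Gset a b)) ∈ Subtype.val ⁻¹' O₁ := h1
            rw [hO₁eq] at this
            rw [hgt]
            exact this
          · exfalso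
            by_cases h0 : (0:ℝ) ∈ O
            · rw [if_pos h0] at h2; exact h2 ht
            · rw [if_neg h0] at h2; exact h2
      · have hgt : g t = 0 := by
          simp only [hgdef]
          rw [dif_neg ht]
        simp only [Set.mem_preimage, hgt, Set.mem_union, Set.mem_inter_iff]
        constructor
        · intro h0
          right
          rw [if_pos h0]
          exact ht
        · rintro (⟨_, h2⟩ | h2)
          · exact absurd h2 ht
          · by_cases h0 : (0:ℝ) ∈ O
            · exact h0
            · rw [if_neg h0] at h2; exact absurd h2 (Set.notMem_empty t)
    rw [hpre]
    refine (hO₁.hasBaireProperty.inter hX₀BP).union ?_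
    by_cases h0 : (0:ℝ) ∈ O
    · rw [if_pos h0]; exact hX₀BP.compl
    · rw [if_neg h0]; exact IsMeagre.empty.hasBaireProperty
  -- the contradiction
  have hB : HasBaireProperty ((fun x => F (x, g x)) ⁻¹' W) := hF g hg W hW
  have hBX : (fun x => F (x, g x)) ⁻¹' W ∩ X₀ = bmap a b '' T := by
    ext t
    constructor
    · rintro ⟨htB, htX⟩
      obtain ⟨x, hx, rfl⟩ := htX
      refine ⟨x, ?_, rfl⟩
      rw [hTdef]
      show (x, f x) ∈ A
      refine ⟨hY₀H hx, hx.2, ?_⟩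
      show (bmap a b x, bmap c d (f x)) ∈ E
      rw [← hg_eq x hx]
      exact htB
    · rintro ⟨x, hxT, rfl⟩
      have hx : x ∈ Y₀ := hTY₀ hxT
      have hxA : (x, f x) ∈ A := hxT
      constructor
      · show F (bmap a b x, g (bmap a b x)) ∈ W
        rw [hg_eq x hx]
        exact hxA.2.2
      · exact ⟨x, hx, rfl⟩
  have hTnoBP : ¬ HasBaireProperty (bmap a b '' T) := by
    intro hBP
    apply hf
    have h1 : HasBaireProperty (Subtype.val ⁻¹' (bmap a b '' T) : Set ↥(Gset a b)) :=
      hBP.restrict isOpen_Ioo (Gset_subset_Ioo hab) (Gset_dense_Ioo hab)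
    have h2 : HasBaireProperty
        ((cantorHomeo hab).symm '' (Subtype.val ⁻¹' (bmap a b '' T)) : Set ↥Hset) :=
      hasBP_homeo_image _ h1
    have heq : ((cantorHomeo hab).symm '' (Subtype.val ⁻¹' (bmap a b '' T)) : Set ↥Hset)
        = (Subtype.val ⁻¹' T : Set ↥Hset) := by
      ext w
      constructor
      · rintro ⟨ww, hww, rfl⟩
        obtain ⟨x, hxT, hxw⟩ := hww
        have hxH : x ∈ Hset := hY₀H (hTY₀ hxT)
        have : (cantorHomeo hab) ⟨x, hxH⟩ = ww := Subtype.ext hxw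
        rw [← this, Homeomorph.symm_apply_apply]
        exact hxT
      · intro hw
        refine ⟨cantorHomeo hab w, ⟨(w : ℕ → Bool), hw, (cantorEquiv_coe hab w).symm⟩, ?_⟩
        rw [Homeomorph.symm_apply_apply]
    rw [heq] at h2
    have h3 : HasBaireProperty (Subtype.val '' (Subtype.val ⁻¹' T : Set ↥Hset) : Set (ℕ → Bool)) :=
      h2.extend Hset_compl_meagre Hset_dense
    rw [Subtype.image_preimage_coe] at h3
    have : Hset ∩ T = T := Set.inter_eq_self_of_subset_right (fun x hx => hY₀H (hTY₀ hx))
    rw [this] at h3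
    exact h3
  exact hTnoBP (hBX ▸ hB.inter hX₀BP)
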